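/- Let $m_1, m_2, r_1, r_2, \alpha_1, \alpha_2$ be integers with $m_1, m_2, r_1, r_2 \geq 1$, and let $m_{12} = \gcd(m_1, m_2)$. Consider the $\GG_m$-action on $\mathrm{Hom}_k(k^{\oplus m_1 r_1}, k^{\oplus m_2 r_2})$ given by $t \cdot x = \Phi_{m_2,r_2}(t^{\alpha_2}) \, x \, \Phi_{m_1,r_1}(t^{\alpha_1})^{-1}$, where $\Phi_{m,r}(t)$ is the block-diagonal matrix with blocks $t^{m-1}\mathrm{Id}_r, t^{m-2}\mathrm{Id}_r, \ldots, \mathrm{Id}_r$. This action preserves the subspace $\mathrm{Hom}_{k_{m_{12}}}(k_{m_1}^{\oplus r_1}, k_{m_2}^{\oplus r_2})$ if and only if $m_{12} = 1$ or $\alpha_1 m_1 = \alpha_2 m_2$. -/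
import Mathlib


noncomputable section

variable (k : Type*) [Field k]

/-- The subspace `Hom_{k_{m₁₂}}(k_{m₁}^{r₁}, k_{m₂}^{r₂}) ⊆ Hom_k(k^{m₁r₁}, k^{m₂r₂})` in
the bases of `k_{m₁}, k_{m₂}` given by decreasing powers of `ε`: matrices which are
block-upper-triangular and constant along block diagonals, with blocks of row-size `br`
and column-size `bc` (for the Hom-space above, `br = (m₂/m₁₂)·r₂`, `bc = (m₁/m₁₂)·r₁`). -/
def IsTruncMat {nr nc : ℕ} (br bc : ℕ) (x : Matrix (Fin nr) (Fin nc) k) : Prop :=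
  (∀ (q : Fin nr) (p : Fin nc), (p : ℕ) / bc < (q : ℕ) / br → x q p = 0) ∧
  (∀ (q q' : Fin nr) (p p' : Fin nc),
    (q : ℕ) / br + (p' : ℕ) / bc = (q' : ℕ) / br + (p : ℕ) / bc →
    (q : ℕ) % br = (q' : ℕ) % br → (p : ℕ) % bc = (p' : ℕ) % bc → x q p = x q' p')

/-- The `𝔾_m`-action `t • x = t^β Φ_{m₂,r₂}(t^{α₂}) x Φ_{m₁,r₁}(t^{α₁})⁻¹` on
`Hom_k(k^{m₁r₁}, k^{m₂r₂})`, where `Φ_{m,r}(t)` is block-diagonal with blocks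
`t^{m-1}Id_r, …, t·Id_r, Id_r`; written entrywise. -/
def actMat (α2 α1 β : ℤ) (m2 r2 m1 r1 : ℕ) (t : kˣ)
    (x : Matrix (Fin (m2 * r2)) (Fin (m1 * r1)) k) :
    Matrix (Fin (m2 * r2)) (Fin (m1 * r1)) k :=
  fun q p =>
    ((t ^ (β + α2 * ((m2 : ℤ) - 1 - ((q : ℕ) / r2 : ℕ))
        - α1 * ((m1 : ℤ) - 1 - ((p : ℕ) / r1 : ℕ))) : kˣ) : k) * x q p

lemma two_zpow_one [CharZero k] (n : ℤ) (h : (2:k)^n = 1) : n = 0 := by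
  rcases lt_trichotomy n 0 with hn | hn | hn
  · exfalso
    have h2 : (2:k) ^ (-n) = 1 := by rw [zpow_neg, h, inv_one]
    have hn' : (-n).toNat ≠ 0 := by omega
    rw [show -n = ((-n).toNat : ℤ) by omega, zpow_natCast] at h2
    have h3 : ((2 ^ (-n).toNat : ℕ) : k) = ((1 : ℕ) : k) := by push_cast; simpa using h2
    have h4 : (2:ℕ) ^ (-n).toNat = 1 := Nat.cast_injective h3
    have := Nat.one_lt_two_pow hn'
    omega
  · exact hn
  · exfalso
    have hn' : n.toNat ≠ 0 := by omega
    rw [show n = (n.toNat : ℤ) by omega, zpow_natCast] at h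
    have h3 : ((2 ^ n.toNat : ℕ) : k) = ((1 : ℕ) : k) := by push_cast; simpa using h
    have h4 : (2:ℕ) ^ n.toNat = 1 := Nat.cast_injective h3
    have := Nat.one_lt_two_pow hn'
    omega

lemma two_zpow_inj [CharZero k] (a b : ℤ) (h : (2:k)^a = (2:k)^b) : a = b := by
  have h2 : (2:k) ^ (a - b) = 1 := by
    rw [zpow_sub₀ (two_ne_zero), h, div_self (zpow_ne_zero _ two_ne_zero)]
  have := two_zpow_one k _ h2
  omega

lemma div_decomp (a b c : ℕ) (hc : 0 < c) :
    a / c = (a % (b * c)) / c + (a / (b * c)) * b := by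
  conv_lhs => rw [← Nat.mod_add_div a (b * c)]
  rw [show a % (b*c) + b*c*(a/(b*c)) = a % (b*c) + (a/(b*c)*b)*c by ring,
      Nat.add_mul_div_right _ _ hc]

/-- The action `t • x = Φ_{m₂,r₂}(t^{α₂}) x Φ_{m₁,r₁}(t^{α₁})⁻¹` preserves the subspace
`Hom_{k_{m₁₂}}(k_{m₁}^{r₁}, k_{m₂}^{r₂})` if and only if `m₁₂ = 1` or `α₁ m₁ = α₂ m₂`. -/
theorem actMat_preserves_truncMat_iff
    [IsAlgClosed k] [CharZero k]
    (m1 m2 r1 r2 : ℕ) (hm1 : 0 < m1) (hm2 : 0 < m2) (hr1 : 0 < r1) (hr2 : 0 < r2)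
    (α1 α2 : ℤ) :
    (∀ (t : kˣ) (x : Matrix (Fin (m2 * r2)) (Fin (m1 * r1)) k),
      IsTruncMat k ((m2 / Nat.gcd m1 m2) * r2) ((m1 / Nat.gcd m1 m2) * r1) x →
      IsTruncMat k ((m2 / Nat.gcd m1 m2) * r2) ((m1 / Nat.gcd m1 m2) * r1)
        (actMat k α2 α1 0 m2 r2 m1 r1 t x)) ↔
    (Nat.gcd m1 m2 = 1 ∨ α1 * m1 = α2 * m2) := by
  set g := Nat.gcd m1 m2 with hgdef
  have hgpos : 0 < g := Nat.gcd_pos_of_pos_left m2 hm1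
  have hm1g : g * (m1 / g) = m1 := Nat.mul_div_cancel' (Nat.gcd_dvd_left m1 m2)
  have hm2g : g * (m2 / g) = m2 := Nat.mul_div_cancel' (Nat.gcd_dvd_right m1 m2)
  have hf1pos : 0 < m1 / g := Nat.div_pos (Nat.le_of_dvd hm1 (Nat.gcd_dvd_left m1 m2)) hgpos
  have hf2pos : 0 < m2 / g := Nat.div_pos (Nat.le_of_dvd hm2 (Nat.gcd_dvd_right m1 m2)) hgpos
  have hbrpos : 0 < (m2 / g) * r2 := Nat.mul_pos hf2pos hr2
  have hbcpos : 0 < (m1 / g) * r1 := Nat.mul_pos hf1pos hr1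
  have hnr : m2 * r2 = g * ((m2 / g) * r2) := by rw [← mul_assoc, hm2g]
  have hnc : m1 * r1 = g * ((m1 / g) * r1) := by rw [← mul_assoc, hm1g]
  constructor
  · intro hpres
    by_contra hcon
    push_neg at hcon
    obtain ⟨hg1, hα⟩ := hcon
    have hg2 : 2 ≤ g := by omega
    have hbrlt : (m2 / g) * r2 < m2 * r2 := by rw [hnr]; nlinarith
    have hbclt : (m1 / g) * r1 < m1 * r1 := by rw [hnc]; nlinarith
    set x : Matrix (Fin (m2 * r2)) (Fin (m1 * r1)) k :=
      fun q p => if (q : ℕ) / ((m2/g)*r2) ≤ (p : ℕ) / ((m1/g)*r1) then 1 else 0 with hxdef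
    have hxt : IsTruncMat k ((m2/g)*r2) ((m1/g)*r1) x := by
      constructor
      · intro q p h
        simp only [hxdef]
        rw [if_neg (by omega)]
      · intro q q' p p' hdiag _ _
        simp only [hxdef]
        by_cases h : (q : ℕ) / ((m2/g)*r2) ≤ (p : ℕ) / ((m1/g)*r1)
        · rw [if_pos h, if_pos (by omega)]
        · rw [if_neg h, if_neg (by omega)]
    have key := (hpres (Units.mk0 (2:k) two_ne_zero) x hxt).2
      ⟨0, by positivity⟩ ⟨(m2/g)*r2, hbrlt⟩ ⟨0, by positivity⟩ ⟨(m1/g)*r1, hbclt⟩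
      (by simp [Nat.div_self hbrpos, Nat.div_self hbcpos])
      (by simp) (by simp)
    simp only [actMat, hxdef, Fin.val_mk, Nat.zero_div, Nat.le_refl, if_pos,
      Nat.mul_div_cancel _ hr2, Nat.mul_div_cancel _ hr1, Nat.div_self hbrpos,
      Nat.div_self hbcpos, Units.val_zpow_eq_zpow_val, Units.val_mk0,
      Nat.cast_zero, mul_one] at key
    have hEeq := two_zpow_inj k _ _ key
    have h1 : (m1:ℤ) = (g:ℤ) * ((m1/g : ℕ) : ℤ) := by exact_mod_cast hm1g.symm
    have h2 : (m2:ℤ) = (g:ℤ) * ((m2/g : ℕ) : ℤ) := by exact_mod_cast hm2g.symm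
    apply hα
    have : α2 * ((m2/g : ℕ) : ℤ) = α1 * ((m1/g : ℕ) : ℤ) := by linarith
    rw [h1, h2]
    linear_combination (g : ℤ) * this.symm
  · rintro (hg1 | hα) t x hxt
    · constructor
      · intro q p h
        exfalso
        have hbr1 : m2 * r2 = (m2/g)*r2 := by rw [hg1, Nat.div_one]
        have hbc1 : m1 * r1 = (m1/g)*r1 := by rw [hg1, Nat.div_one]
        have hq : (q : ℕ) / ((m2/g)*r2) = 0 :=
          Nat.div_eq_of_lt (lt_of_lt_of_eq q.2 hbr1)
        have hp : (p : ℕ) / ((m1/g)*r1) = 0 :=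
          Nat.div_eq_of_lt (lt_of_lt_of_eq p.2 hbc1)
        omega
      · intro q q' p p' _ hq hp
        have hbr1 : m2 * r2 = (m2/g)*r2 := by rw [hg1, Nat.div_one]
        have hbc1 : m1 * r1 = (m1/g)*r1 := by rw [hg1, Nat.div_one]
        have hql : (q : ℕ) < (m2/g)*r2 := lt_of_lt_of_eq q.2 hbr1
        have hq'l : (q' : ℕ) < (m2/g)*r2 := lt_of_lt_of_eq q'.2 hbr1
        have hpl : (p : ℕ) < (m1/g)*r1 := lt_of_lt_of_eq p.2 hbc1
        have hp'l : (p' : ℕ) < (m1/g)*r1 := lt_of_lt_of_eq p'.2 hbc1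
        rw [Nat.mod_eq_of_lt hql, Nat.mod_eq_of_lt hq'l] at hq
        rw [Nat.mod_eq_of_lt hpl, Nat.mod_eq_of_lt hp'l] at hp
        have : q = q' := Fin.ext hq
        subst this
        have : p = p' := Fin.ext hp
        subst this
        rfl
    · have hgne : (g:ℤ) ≠ 0 := by exact_mod_cast hgpos.ne'
      have h1 : (m1:ℤ) = (g:ℤ) * ((m1/g : ℕ) : ℤ) := by exact_mod_cast hm1g.symm
      have h2 : (m2:ℤ) = (g:ℤ) * ((m2/g : ℕ) : ℤ) := by exact_mod_cast hm2g.symm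
      have hc : α1 * ((m1/g : ℕ) : ℤ) = α2 * ((m2/g : ℕ) : ℤ) := by
        apply mul_left_cancel₀ hgne
        rw [h1, h2] at hα
        linarith
      constructor
      · intro q p h
        have := hxt.1 q p h
        simp [actMat, this]
      · intro q q' p p' hdiag hq hp
        have hxe := hxt.2 q q' p p' hdiag hq hp
        have dq := div_decomp (q : ℕ) (m2/g) r2 hr2
        have dq' := div_decomp (q' : ℕ) (m2/g) r2 hr2
        have dp := div_decomp (p : ℕ) (m1/g) r1 hr1
        have dp' := div_decomp (p' : ℕ) (m1/g) r1 hr1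
        rw [hq] at dq
        rw [hp] at dp
        have hdz : (((q:ℕ) / ((m2/g)*r2) : ℕ) : ℤ) + (((p':ℕ) / ((m1/g)*r1) : ℕ) : ℤ)
            = (((q':ℕ) / ((m2/g)*r2) : ℕ) : ℤ) + (((p:ℕ) / ((m1/g)*r1) : ℕ) : ℤ) := by
          exact_mod_cast hdiag
        have hE : (0 + α2 * ((m2 : ℤ) - 1 - ((q : ℕ) / r2 : ℕ))
              - α1 * ((m1 : ℤ) - 1 - ((p : ℕ) / r1 : ℕ)))
            = (0 + α2 * ((m2 : ℤ) - 1 - ((q' : ℕ) / r2 : ℕ))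
              - α1 * ((m1 : ℤ) - 1 - ((p' : ℕ) / r1 : ℕ))) := by
          rw [dq, dq', dp, dp']
          simp only [Nat.cast_add, Nat.cast_mul]
          linear_combination (-(α2 * ((m2/g : ℕ) : ℤ))) * hdz
            + ((((p:ℕ) / ((m1/g)*r1) : ℕ) : ℤ) - (((p':ℕ) / ((m1/g)*r1) : ℕ) : ℤ)) * hc
        show ((t ^ _ : kˣ) : k) * x q p = ((t ^ _ : kˣ) : k) * x q' p'
        rw [hE, hxe]

end
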